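/- Let m ≥ 3 be odd. Then the first group cohomology H^1(S_m, M) of the symmetric group S_m with coefficients in the zero-sum submodule M ⊂ (F_2)^m vanishes. -/

import Mathlib

set_option maxHeartbeats 2000000

/-- For odd `m ≥ 3`, `H¹(Sₘ, M) = 0` for the zero-sum module
`M ⊂ (F₂)^m`: every 1-cocycle `c : Sₘ → M` (for the action `(g • v) i = v (g⁻¹ i)`,
i.e. `g • v = v ∘ g⁻¹`) is a coboundary. -/
theorem stmt3 (m : ℕ) (hm : 3 ≤ m) (hodd : Odd m)
    (c : Equiv.Perm (Fin m) → (Fin m → ZMod 2))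
    (hmem : ∀ g, ∑ i, c g i = 0)
    (hcoc : ∀ g h, c (g * h) = c g + (c h) ∘ ⇑g⁻¹) :
    ∃ v : Fin m → ZMod 2, (∑ i, v i = 0) ∧ ∀ g, c g = v ∘ ⇑g⁻¹ - v := by
  classical
  have hm2 : m % 2 = 1 := Nat.odd_iff.mp hodd
  -- distinguished points
  set i0 : Fin m := ⟨0, by omega⟩ with hi0def
  set i1 : Fin m := ⟨1, by omega⟩ with hi1def
  set i2 : Fin m := ⟨2, by omega⟩ with hi2def
  have h01 : i0 ≠ i1 := by simp [hi0def, hi1def, Fin.ext_iff]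
  have h02 : i0 ≠ i2 := by simp [hi0def, hi2def, Fin.ext_iff]
  have h12 : i1 ≠ i2 := by simp [hi1def, hi2def, Fin.ext_iff]
  -- pointwise cocycle identity
  have hpt : ∀ g h j, c (g * h) j = c g j + c h (g⁻¹ j) := by
    intro g h j
    have := congrFun (hcoc g h) j
    simpa using this
  -- c 1 = 0
  have hc1 : ∀ j, c 1 j = 0 := by
    intro j
    have h := hpt 1 1 j
    have key : ∀ x : ZMod 2, x = x + x → x = 0 := by decide
    simp only [one_mul, inv_one, Equiv.Perm.coe_one, id_eq] at h
    exact key _ h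
  -- inverse formula
  have hinv : ∀ g x, c g⁻¹ x = c g (g x) := by
    intro g x
    have h := hpt g⁻¹ g x
    rw [inv_mul_cancel, inv_inv] at h
    have key : ∀ a b : ZMod 2, (0 : ZMod 2) = a + b → a = b := by decide
    exact key _ _ (by rw [← h, hc1])
  -- involution symmetry for swaps
  have hswapsym : ∀ a b x, c (Equiv.swap a b) (Equiv.swap a b x) = c (Equiv.swap a b) x := by
    intro a b x
    have h := hinv (Equiv.swap a b) x
    rw [Equiv.swap_inv] at h
    exact h.symm
  -- conjugation invariance
  have hconj : ∀ (g : Equiv.Perm (Fin m)) (a b j : Fin m), j ≠ a → j ≠ b →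
      c (Equiv.swap (g a) (g b)) (g j) = c (Equiv.swap a b) j := by
    intro g a b j hja hjb
    rw [Equiv.swap_apply_apply]
    have h1 : c (g * Equiv.swap a b * g⁻¹) (g j)
        = c (g * Equiv.swap a b) (g j) + c g⁻¹ ((g * Equiv.swap a b)⁻¹ (g j)) := hpt _ _ _
    have hfix : Equiv.swap a b j = j := Equiv.swap_apply_of_ne_of_ne hja hjb
    have e1 : (g * Equiv.swap a b)⁻¹ (g j) = j := by
      simp [Equiv.Perm.mul_apply, Equiv.swap_inv, hfix]
    have h2 : c (g * Equiv.swap a b) (g j) = c g (g j) + c (Equiv.swap a b) j := by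
      have := hpt g (Equiv.swap a b) (g j)
      simpa [hfix] using this
    rw [e1, hinv] at h1
    rw [h2] at h1
    have key : ∀ p q r : ZMod 2, p = (q + r) + q → p = r := by decide
    exact key _ _ _ h1
  -- existence of a permutation moving (i0,i1,i2) to any distinct triple
  have hex : ∀ a b j : Fin m, a ≠ b → j ≠ a → j ≠ b →
      ∃ g : Equiv.Perm (Fin m), g i0 = a ∧ g i1 = b ∧ g i2 = j := by
    intro a b j hab hja hjb
    obtain ⟨g1, hg1⟩ : ∃ g, g = Equiv.swap i0 a := ⟨_, rfl⟩
    obtain ⟨b', hb'⟩ : ∃ x, x = g1⁻¹ b := ⟨_, rfl⟩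
    have hg1b' : g1 b' = b := by rw [hb']; exact Equiv.apply_symm_apply _ _
    have hg1i0 : g1 i0 = a := by rw [hg1]; exact Equiv.swap_apply_left _ _
    have hb'0 : b' ≠ i0 := by
      intro h
      apply hab
      rw [← hg1b', h, hg1i0]
    obtain ⟨g2, hg2⟩ : ∃ g, g = Equiv.swap i1 b' := ⟨_, rfl⟩
    have hg20 : g2 i0 = i0 := by
      rw [hg2]; exact Equiv.swap_apply_of_ne_of_ne h01 (Ne.symm hb'0)
    have hg21 : g2 i1 = b' := by rw [hg2]; exact Equiv.swap_apply_left _ _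
    obtain ⟨j', hj'⟩ : ∃ x, x = (g1 * g2)⁻¹ j := ⟨_, rfl⟩
    have hgj' : (g1 * g2) j' = j := by rw [hj']; exact Equiv.apply_symm_apply _ _
    have hgi0 : (g1 * g2) i0 = a := by
      rw [Equiv.Perm.mul_apply, hg20, hg1i0]
    have hgi1 : (g1 * g2) i1 = b := by
      rw [Equiv.Perm.mul_apply, hg21, hg1b']
    have hj'0 : j' ≠ i0 := by
      intro h; apply hja; rw [← hgj', h, hgi0]
    have hj'1 : j' ≠ i1 := by
      intro h; apply hjb; rw [← hgj', h, hgi1]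
    obtain ⟨g3, hg3⟩ : ∃ g, g = Equiv.swap i2 j' := ⟨_, rfl⟩
    refine ⟨g1 * g2 * g3, ?_, ?_, ?_⟩
    · have h3 : g3 i0 = i0 := by
        rw [hg3]; exact Equiv.swap_apply_of_ne_of_ne h02 (Ne.symm hj'0)
      rw [Equiv.Perm.mul_apply, h3]; exact hgi0
    · have h3 : g3 i1 = i1 := by
        rw [hg3]; exact Equiv.swap_apply_of_ne_of_ne h12 (Ne.symm hj'1)
      rw [Equiv.Perm.mul_apply, h3]; exact hgi1
    · have h3 : g3 i2 = j' := by rw [hg3]; exact Equiv.swap_apply_left _ _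
      rw [Equiv.Perm.mul_apply, h3]; exact hgj'
  -- all "off-swap" values are equal to a common ε
  have hall : ∀ a b j : Fin m, a ≠ b → j ≠ a → j ≠ b →
      c (Equiv.swap a b) j = c (Equiv.swap i0 i1) i2 := by
    intro a b j hab hja hjb
    obtain ⟨g, hg0, hg1, hg2⟩ := hex a b j hab hja hjb
    rw [← hg0, ← hg1, ← hg2]
    exact hconj g i0 i1 i2 h02.symm h12.symm
  -- ε = 0, by the zero-sum condition and m odd
  have hε : c (Equiv.swap i0 i1) i2 = 0 := by
    set s := Equiv.swap i0 i1 with hs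
    set ε := c s i2 with hεdef
    have hpair : ({i0, i1} : Finset (Fin m)) ⊆ Finset.univ := Finset.subset_univ _
    have hsplit := Finset.sum_sdiff (f := c s) hpair
    rw [hmem s] at hsplit
    have hps : ∑ i ∈ ({i0, i1} : Finset (Fin m)), c s i = 0 := by
      rw [Finset.sum_pair h01]
      have : c s i1 = c s i0 := by
        have := hswapsym i0 i1 i0
        rwa [Equiv.swap_apply_left] at this
      have htwo2 : ∀ x : ZMod 2, x + x = 0 := by decide
      rw [this]
      exact htwo2 _
    have hdiff : ∀ i ∈ Finset.univ \ ({i0, i1} : Finset (Fin m)), c s i = ε := by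
      intro i hi
      simp only [Finset.mem_sdiff, Finset.mem_insert, Finset.mem_singleton, not_or] at hi
      exact hall i0 i1 i h01 hi.2.1 hi.2.2
    rw [Finset.sum_congr rfl hdiff, Finset.sum_const, hps, add_zero] at hsplit
    have hcard : (Finset.univ \ ({i0, i1} : Finset (Fin m))).card = m - 2 := by
      rw [Finset.card_sdiff_of_subset hpair, Finset.card_univ, Fintype.card_fin,
        Finset.card_pair h01]
    rw [hcard] at hsplit
    have hcast : ((m - 2 : ℕ) : ZMod 2) = 1 := by
      rw [← ZMod.natCast_mod]
      have : (m - 2) % 2 = 1 := by omega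
      rw [this, Nat.cast_one]
    rw [nsmul_eq_mul, hcast, one_mul] at hsplit
    exact hsplit
  have hε' : ∀ a b j : Fin m, a ≠ b → j ≠ a → j ≠ b → c (Equiv.swap a b) j = 0 := by
    intro a b j hab hja hjb
    rw [hall a b j hab hja hjb, hε]
  -- the candidate potential
  set v : Fin m → ZMod 2 := fun i => c (Equiv.swap i0 i) i with hv
  have hv0 : v i0 = 0 := by
    simp only [hv]
    rw [Equiv.swap_self]
    exact hc1 i0
  -- the key swap-coboundary identity at the point a
  have hBa : ∀ a b : Fin m, a ≠ b → c (Equiv.swap a b) a = v b + v a := by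
    intro a b hab
    by_cases ha0 : a = i0
    · subst ha0
      have h1 : c (Equiv.swap i0 b) i0 = c (Equiv.swap i0 b) b := by
        have := hswapsym i0 b b
        rw [Equiv.swap_apply_right] at this
        exact this
      rw [h1, hv0, add_zero]
    · by_cases hb0 : b = i0
      · subst hb0
        rw [Equiv.swap_comm, hv0, zero_add]
      · -- generic case: i0, a, b distinct
        have hdecomp : Equiv.swap a b
            = Equiv.swap i0 a * Equiv.swap i0 b * (Equiv.swap i0 a)⁻¹ := by
          have := Equiv.swap_apply_apply (Equiv.swap i0 a) i0 b
          rw [Equiv.swap_apply_left,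
            Equiv.swap_apply_of_ne_of_ne hb0 (Ne.symm hab)] at this
          exact this
        rw [Equiv.swap_inv] at hdecomp
        rw [hdecomp]
        have h1 := hpt (Equiv.swap i0 a * Equiv.swap i0 b) (Equiv.swap i0 a) a
        have h2 := hpt (Equiv.swap i0 a) (Equiv.swap i0 b) a
        have e1 : (Equiv.swap i0 a * Equiv.swap i0 b)⁻¹ a = b := by
          simp [mul_inv_rev, Equiv.swap_inv, Equiv.Perm.mul_apply,
            Equiv.swap_apply_right]
        have e2 : (Equiv.swap i0 a)⁻¹ a = i0 := by
          simp [Equiv.swap_inv, Equiv.swap_apply_right]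
        rw [e1] at h1
        rw [e2] at h2
        rw [h2] at h1
        have e3 : c (Equiv.swap i0 a) b = 0 :=
          hε' i0 a b (fun h => ha0 h.symm) (fun h => hb0 h) (fun h => hab h.symm)
        have e4 : c (Equiv.swap i0 b) i0 = c (Equiv.swap i0 b) b := by
          have := hswapsym i0 b b
          rw [Equiv.swap_apply_right] at this
          exact this
        rw [e3, e4] at h1
        rw [h1]
        have key : ∀ p q : ZMod 2, (p + q) + 0 = q + p := by decide
        exact key _ _
  -- full swap-coboundary identity
  have hB : ∀ a b : Fin m, a ≠ b → ∀ j,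
      c (Equiv.swap a b) j = v (Equiv.swap a b j) + v j := by
    intro a b hab j
    by_cases hja : j = a
    · subst hja
      rw [Equiv.swap_apply_left]
      exact hBa j b hab
    · by_cases hjb : j = b
      · subst hjb
        rw [Equiv.swap_apply_right]
        have h1 : c (Equiv.swap a j) j = c (Equiv.swap a j) a := by
          have := hswapsym a j a
          rw [Equiv.swap_apply_left] at this
          exact this
        rw [h1, hBa a j hab]
        have key : ∀ p q : ZMod 2, q + p = p + q := by decide
        exact key _ _
      · rw [Equiv.swap_apply_of_ne_of_ne hja hjb, hε' a b j hab hja hjb]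
        have key : ∀ p : ZMod 2, (0 : ZMod 2) = p + p := by decide
        exact key _
  -- main coboundary identity
  have hmain : ∀ g : Equiv.Perm (Fin m), ∀ j, c g j = v (g⁻¹ j) + v j := by
    intro g
    refine Equiv.Perm.swap_induction_on g ?_ ?_
    · intro j
      rw [hc1]
      simp only [inv_one, Equiv.Perm.coe_one, id_eq]
      have key : ∀ p : ZMod 2, (0 : ZMod 2) = p + p := by decide
      exact key _
    · intro x a b hab ih j
      rw [hpt]
      rw [hB a b hab j]
      rw [Equiv.swap_inv]
      rw [ih (Equiv.swap a b j)]
      have e : (Equiv.swap a b * x)⁻¹ j = x⁻¹ (Equiv.swap a b j) := by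
        simp [mul_inv_rev, Equiv.Perm.mul_apply, Equiv.swap_inv]
      rw [e]
      have key : ∀ p q r : ZMod 2, (p + q) + (r + p) = r + q := by decide
      exact key _ _ _
  -- adjust v to have zero sum
  set S := ∑ i, v i with hS
  refine ⟨fun i => v i + S, ?_, ?_⟩
  · rw [Finset.sum_add_distrib, Finset.sum_const, Finset.card_univ, Fintype.card_fin,
      nsmul_eq_mul]
    have hcast : ((m : ℕ) : ZMod 2) = 1 := by
      rw [← ZMod.natCast_mod, hm2, Nat.cast_one]
    rw [hcast, one_mul, ← hS]
    have key : ∀ s : ZMod 2, s + s = 0 := by decide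
    exact key _
  · intro g
    funext j
    simp only [Pi.sub_apply, Function.comp_apply]
    rw [hmain g j]
    have key : ∀ p q s : ZMod 2, p + q = (p + s) - (q + s) := by decide
    exact key _ _ _
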